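/- arXiv:1410.4432 — 5 statements merged into one kernel-verified Lean document; each statement's English description precedes it below -/
import Mathlib

section
/- Let φ : Meas(Ω,[0,1]) → [0,1] be a finitely additive integration operator. Then φ has a unique linear extension to the real vector space of bounded measurable functions Ω → ℝ. -/
open Set Filter

/-- The set of measurable functions `Ω → [0,1]`. -/
def MeasI (Ω : Type*) [MeasurableSpace Ω] : Set (Ω → ℝ) :=
  {f | Measurable f ∧ ∀ ω, f ω ∈ Set.Icc (0:ℝ) 1}

/-- A finitely additive integration operator on `Ω`: an affine, weakly averaging
functional `Meas(Ω,[0,1]) → [0,1]`. -/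
structure FinAddIntOp (Ω : Type*) [MeasurableSpace Ω] where
  toFun : MeasI Ω → ℝ
  mem_Icc : ∀ f, toFun f ∈ Set.Icc (0:ℝ) 1
  affine : ∀ (f g : MeasI Ω) (r : ℝ), r ∈ Set.Icc (0:ℝ) 1 →
    ∀ h : (fun ω => r * (f : Ω → ℝ) ω + (1 - r) * (g : Ω → ℝ) ω) ∈ MeasI Ω,
    toFun ⟨_, h⟩ = r * toFun f + (1 - r) * toFun g
  avg : ∀ r ∈ Set.Icc (0:ℝ) 1, ∀ h : (fun _ : Ω => r) ∈ MeasI Ω, toFun ⟨_, h⟩ = r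

theorem indicator_mem_MeasI {Ω : Type*} [MeasurableSpace Ω] {A : Set Ω}
    (hA : MeasurableSet A) : A.indicator (fun _ => (1:ℝ)) ∈ MeasI Ω := by
  constructor
  · exact measurable_const.indicator hA
  · intro ω
    by_cases h : ω ∈ A <;> simp [Set.indicator_apply, h]

/-- The vector space of bounded measurable real-valued functions on `Ω`, as a
submodule of `Ω → ℝ`. -/
def Mb (Ω : Type*) [MeasurableSpace Ω] : Submodule ℝ (Ω → ℝ) where
  carrier := {f | Measurable f ∧ ∃ C, ∀ ω, |f ω| ≤ C}
  zero_mem' := ⟨measurable_const, 0, by simp⟩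
  add_mem' := by
    rintro f g ⟨hf, Cf, hCf⟩ ⟨hg, Cg, hCg⟩
    exact ⟨hf.add hg, Cf + Cg, fun ω =>
      (abs_add_le _ _).trans (add_le_add (hCf ω) (hCg ω))⟩
  smul_mem' := by
    rintro c f ⟨hf, Cf, hCf⟩
    refine ⟨hf.const_smul c, |c| * Cf, fun ω => ?_⟩
    have : |c * f ω| = |c| * |f ω| := abs_mul c (f ω)
    calc |(c • f) ω| = |c| * |f ω| := this
      _ ≤ |c| * Cf := by
          exact mul_le_mul_of_nonneg_left (hCf ω) (abs_nonneg c)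

theorem mem_Mb_of_mem_MeasI {Ω : Type*} [MeasurableSpace Ω] (f : MeasI Ω) :
    (f : Ω → ℝ) ∈ Mb Ω :=
  ⟨f.2.1, 1, fun ω => abs_le.mpr ⟨by linarith [(f.2.2 ω).1], (f.2.2 ω).2⟩⟩

section Aux

variable {Ω : Type*} [MeasurableSpace Ω]

/-- Normalization of a bounded function into `[0,1]`. -/
noncomputable def nzA (f : Ω → ℝ) (C : ℝ) : Ω → ℝ := fun ω => (f ω + C) / (2 * C)

theorem nzA_mem {f : Ω → ℝ} {C : ℝ} (hf : Measurable f) (hC : 0 < C)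
    (hb : ∀ ω, |f ω| ≤ C) : nzA f C ∈ MeasI Ω := by
  refine ⟨(hf.add_const C).div_const _, fun ω => ?_⟩
  obtain ⟨h1, h2⟩ := abs_le.mp (hb ω)
  constructor
  · show (0:ℝ) ≤ (f ω + C) / (2 * C)
    apply div_nonneg (by linarith) (by linarith)
  · show (f ω + C) / (2 * C) ≤ 1
    rw [div_le_one (by linarith)]; linarith

variable (φ : FinAddIntOp Ω)

theorem affA (f g u : MeasI Ω) (r : ℝ) (hr : r ∈ Set.Icc (0:ℝ) 1)
    (hu : (u : Ω → ℝ) = fun ω => r * (f : Ω → ℝ) ω + (1 - r) * (g : Ω → ℝ) ω) :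
    φ.toFun u = r * φ.toFun f + (1 - r) * φ.toFun g := by
  have h : (fun ω => r * (f : Ω → ℝ) ω + (1 - r) * (g : Ω → ℝ) ω) ∈ MeasI Ω := hu ▸ u.2
  rw [show u = ⟨_, h⟩ from Subtype.ext hu]
  exact φ.affine f g r hr h

theorem avgA (r : ℝ) (hr : r ∈ Set.Icc (0:ℝ) 1) (u : MeasI Ω)
    (hu : (u : Ω → ℝ) = fun _ => r) : φ.toFun u = r := by
  have h : (fun _ : Ω => r) ∈ MeasI Ω := hu ▸ u.2
  rw [show u = ⟨_, h⟩ from Subtype.ext hu]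
  exact φ.avg r hr h

theorem complA (g u : MeasI Ω) (hu : (u : Ω → ℝ) = fun ω => 1 - (g : Ω → ℝ) ω) :
    φ.toFun u = 1 - φ.toFun g := by
  have halfmem : (fun _ : Ω => (1/2 : ℝ)) ∈ MeasI Ω := ⟨measurable_const, fun ω => by norm_num⟩
  have h1 : φ.toFun ⟨_, halfmem⟩ = (1/2 : ℝ) := φ.avg _ (by norm_num) halfmem
  have h2 := affA φ g u ⟨_, halfmem⟩ (1/2) (by norm_num) (by
    funext ω; simp only [hu]; ring)
  rw [h1] at h2; linarith

/-- The candidate value of the extension, computed at bound `C`. -/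
noncomputable def valA (f : Ω → ℝ) (C : ℝ) (h : nzA f C ∈ MeasI Ω) : ℝ :=
  2 * C * φ.toFun ⟨_, h⟩ - C

theorem valA_indep_le {f : Ω → ℝ} {C C' : ℝ} (hC : 0 < C) (hCC : C ≤ C')
    (h : nzA f C ∈ MeasI Ω) (h' : nzA f C' ∈ MeasI Ω) :
    valA φ f C h = valA φ f C' h' := by
  have hC' : 0 < C' := lt_of_lt_of_le hC hCC
  have halfmem : (fun _ : Ω => (1/2 : ℝ)) ∈ MeasI Ω := ⟨measurable_const, fun ω => by norm_num⟩
  have hr : C / C' ∈ Set.Icc (0:ℝ) 1 :=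
    ⟨div_nonneg hC.le hC'.le, (div_le_one hC').mpr hCC⟩
  have key := affA φ ⟨_, h⟩ ⟨_, halfmem⟩ ⟨_, h'⟩ (C / C') hr (by
    funext ω
    show (f ω + C') / (2 * C') = C / C' * ((f ω + C) / (2 * C)) + (1 - C / C') * (1/2)
    field_simp
    ring)
  have h1 : φ.toFun ⟨_, halfmem⟩ = (1/2 : ℝ) := φ.avg _ (by norm_num) halfmem
  rw [h1] at key
  unfold valA
  rw [key]
  field_simp
  ring

theorem valA_indep {f : Ω → ℝ} {C C' : ℝ} (hf : Measurable f) (hC : 0 < C) (hC' : 0 < C')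
    (hb : ∀ ω, |f ω| ≤ C) (hb' : ∀ ω, |f ω| ≤ C')
    (h : nzA f C ∈ MeasI Ω) (h' : nzA f C' ∈ MeasI Ω) :
    valA φ f C h = valA φ f C' h' := by
  have hbm : ∀ ω, |f ω| ≤ max C C' := fun ω => (hb ω).trans (le_max_left _ _)
  have hm : nzA f (max C C') ∈ MeasI Ω := nzA_mem hf (lt_max_of_lt_left hC) hbm
  rw [valA_indep_le φ hC (le_max_left _ _) h hm,
      valA_indep_le φ hC' (le_max_right _ _) h' hm]

theorem valA_add {f g : Ω → ℝ} {C D : ℝ} (hC : 0 < C) (hD : 0 < D)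
    (h : nzA f C ∈ MeasI Ω) (h' : nzA g D ∈ MeasI Ω)
    (h'' : nzA (f + g) (C + D) ∈ MeasI Ω) :
    valA φ (f + g) (C + D) h'' = valA φ f C h + valA φ g D h' := by
  have hr : C / (C + D) ∈ Set.Icc (0:ℝ) 1 :=
    ⟨div_nonneg hC.le (by linarith), (div_le_one (by linarith)).mpr (by linarith)⟩
  have key := affA φ ⟨_, h⟩ ⟨_, h'⟩ ⟨_, h''⟩ (C / (C + D)) hr (by
    funext ω
    show (f ω + g ω + (C + D)) / (2 * (C + D)) =
      C / (C + D) * ((f ω + C) / (2 * C)) + (1 - C / (C + D)) * ((g ω + D) / (2 * D))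
    have : (C : ℝ) + D ≠ 0 := by positivity
    field_simp
    ring)
  unfold valA
  rw [key]
  have : (C : ℝ) + D ≠ 0 := by positivity
  field_simp
  ring

theorem valA_smul_pos {f : Ω → ℝ} {C c : ℝ} (hC : 0 < C) (hc : 0 < c)
    (h : nzA f C ∈ MeasI Ω) (h' : nzA (c • f) (c * C) ∈ MeasI Ω) :
    valA φ (c • f) (c * C) h' = c * valA φ f C h := by
  have heq : φ.toFun ⟨_, h'⟩ = φ.toFun ⟨_, h⟩ := by
    congr 1
    apply Subtype.ext
    funext ω
    show (c * f ω + c * C) / (2 * (c * C)) = (f ω + C) / (2 * C)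
    rw [show c * f ω + c * C = c * (f ω + C) by ring, show 2 * (c * C) = c * (2 * C) by ring,
      mul_div_mul_left _ _ hc.ne']
  unfold valA
  rw [heq]; ring

theorem valA_smul_neg {f : Ω → ℝ} {C c : ℝ} (hC : 0 < C) (hc : c < 0)
    (h : nzA f C ∈ MeasI Ω) (h' : nzA (c • f) (-c * C) ∈ MeasI Ω) :
    valA φ (c • f) (-c * C) h' = c * valA φ f C h := by
  have hcomp : φ.toFun ⟨_, h'⟩ = 1 - φ.toFun ⟨_, h⟩ := by
    apply complA φ ⟨_, h⟩ ⟨_, h'⟩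
    funext ω
    show (c * f ω + -c * C) / (2 * (-c * C)) = 1 - (f ω + C) / (2 * C)
    have hC0 : (2:ℝ) * C ≠ 0 := by positivity
    have hc0 : -c ≠ 0 := by linarith
    rw [show c * f ω + -c * C = (-c) * (C - f ω) by ring,
      show 2 * (-c * C) = (-c) * (2 * C) by ring,
      mul_div_mul_left _ _ hc0]
    field_simp
    ring
  unfold valA
  rw [hcomp]; ring

theorem valA_zero {C : ℝ} (hC : 0 < C) (h : nzA (0 : Ω → ℝ) C ∈ MeasI Ω) :
    valA φ 0 C h = 0 := by
  have : φ.toFun ⟨_, h⟩ = (1/2 : ℝ) := by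
    apply avgA φ (1/2) (by norm_num)
    funext ω
    show ((0:ℝ) + C) / (2 * C) = 1/2
    rw [zero_add]
    field_simp
  unfold valA
  rw [this]; ring

/-- A canonical positive bound for an element of `Mb Ω`. -/
noncomputable def bndA (f : Mb Ω) : ℝ := max (Classical.choose f.2.2) 1

theorem bndA_pos (f : Mb Ω) : 0 < bndA f := lt_of_lt_of_le one_pos (le_max_right _ _)

theorem bndA_bound (f : Mb Ω) : ∀ ω, |(f : Ω → ℝ) ω| ≤ bndA f := fun ω =>
  (Classical.choose_spec f.2.2 ω).trans (le_max_left _ _)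

theorem nzA_bnd_mem (f : Mb Ω) : nzA (f : Ω → ℝ) (bndA f) ∈ MeasI Ω :=
  nzA_mem f.2.1 (bndA_pos f) (bndA_bound f)

/-- The extension of `φ` to `Mb Ω` as a plain function. -/
noncomputable def psiA (f : Mb Ω) : ℝ := valA φ (f : Ω → ℝ) (bndA f) (nzA_bnd_mem f)

theorem psiA_eq (f : Mb Ω) {C : ℝ} (hC : 0 < C) (hb : ∀ ω, |(f : Ω → ℝ) ω| ≤ C)
    (h : nzA (f : Ω → ℝ) C ∈ MeasI Ω) : psiA φ f = valA φ (f : Ω → ℝ) C h :=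
  valA_indep φ f.2.1 (bndA_pos f) hC (bndA_bound f) hb _ _

end Aux

/-- A finitely additive integration operator has a unique linear extension to the
vector space of bounded measurable functions. -/
theorem stmt9 {Ω : Type*} [MeasurableSpace Ω] (φ : FinAddIntOp Ω) :
    ∃! ψ : Mb Ω →ₗ[ℝ] ℝ, ∀ f : MeasI Ω, ψ ⟨(f : Ω → ℝ), mem_Mb_of_mem_MeasI f⟩ = φ.toFun f := by
  classical
  have onemem : (fun _ : Ω => (1:ℝ)) ∈ MeasI Ω := ⟨measurable_const, fun ω => by norm_num⟩
  have hone : φ.toFun ⟨_, onemem⟩ = 1 := φ.avg 1 (by norm_num) onemem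
  -- additivity of psiA
  have hadd : ∀ f g : Mb Ω, psiA φ (f + g) = psiA φ f + psiA φ g := by
    intro f g
    have hb : ∀ ω, |((f + g : Mb Ω) : Ω → ℝ) ω| ≤ bndA f + bndA g := by
      intro ω
      show |(f : Ω → ℝ) ω + (g : Ω → ℝ) ω| ≤ _
      exact (abs_add_le _ _).trans (add_le_add (bndA_bound f ω) (bndA_bound g ω))
    have hC : 0 < bndA f + bndA g := by linarith [bndA_pos f, bndA_pos g]
    have hmem : nzA ((f + g : Mb Ω) : Ω → ℝ) (bndA f + bndA g) ∈ MeasI Ω :=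
      nzA_mem (f + g).2.1 hC hb
    rw [psiA_eq φ (f + g) hC hb hmem]
    exact valA_add φ (bndA_pos f) (bndA_pos g) (nzA_bnd_mem f) (nzA_bnd_mem g) hmem
  -- homogeneity of psiA
  have hsmul : ∀ (c : ℝ) (f : Mb Ω), psiA φ (c • f) = c * psiA φ f := by
    intro c f
    rcases lt_trichotomy c 0 with hc | hc | hc
    · have hC : 0 < -c * bndA f := mul_pos (by linarith) (bndA_pos f)
      have hb : ∀ ω, |((c • f : Mb Ω) : Ω → ℝ) ω| ≤ -c * bndA f := by
        intro ω
        show |c * (f : Ω → ℝ) ω| ≤ _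
        rw [abs_mul, abs_of_neg hc]
        exact mul_le_mul_of_nonneg_left (bndA_bound f ω) (by linarith)
      have hmem : nzA ((c • f : Mb Ω) : Ω → ℝ) (-c * bndA f) ∈ MeasI Ω :=
        nzA_mem (c • f).2.1 hC hb
      rw [psiA_eq φ (c • f) hC hb hmem]
      exact valA_smul_neg φ (bndA_pos f) hc (nzA_bnd_mem f) hmem
    · subst hc
      rw [zero_smul, zero_mul]
      have hb : ∀ ω, |((0 : Mb Ω) : Ω → ℝ) ω| ≤ 1 := by
        intro ω; show |(0:ℝ)| ≤ 1; norm_num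
      have hmem : nzA ((0 : Mb Ω) : Ω → ℝ) 1 ∈ MeasI Ω := nzA_mem (0 : Mb Ω).2.1 one_pos hb
      rw [psiA_eq φ 0 one_pos hb hmem]
      exact valA_zero φ one_pos hmem
    · have hC : 0 < c * bndA f := mul_pos hc (bndA_pos f)
      have hb : ∀ ω, |((c • f : Mb Ω) : Ω → ℝ) ω| ≤ c * bndA f := by
        intro ω
        show |c * (f : Ω → ℝ) ω| ≤ _
        rw [abs_mul, abs_of_pos hc]
        exact mul_le_mul_of_nonneg_left (bndA_bound f ω) hc.le
      have hmem : nzA ((c • f : Mb Ω) : Ω → ℝ) (c * bndA f) ∈ MeasI Ω :=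
        nzA_mem (c • f).2.1 hC hb
      rw [psiA_eq φ (c • f) hC hb hmem]
      exact valA_smul_pos φ (bndA_pos f) hc (nzA_bnd_mem f) hmem
  set ψ : Mb Ω →ₗ[ℝ] ℝ :=
    { toFun := psiA φ
      map_add' := hadd
      map_smul' := fun c f => by simpa using hsmul c f } with hψdef
  -- every linear map agreeing with φ on MeasI has the canonical value
  have prop_val : ∀ ψ' : Mb Ω →ₗ[ℝ] ℝ,
      (∀ f : MeasI Ω, ψ' ⟨(f : Ω → ℝ), mem_Mb_of_mem_MeasI f⟩ = φ.toFun f) →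
      ∀ f : Mb Ω, ψ' f = 2 * bndA f * φ.toFun ⟨_, nzA_bnd_mem f⟩ - bndA f := by
    intro ψ' hp f
    set C := bndA f with hCdef
    have hC : 0 < C := bndA_pos f
    set gM : MeasI Ω := ⟨nzA (f : Ω → ℝ) C, nzA_bnd_mem f⟩ with hgdef
    set oneM : MeasI Ω := ⟨fun _ => (1:ℝ), onemem⟩ with honedef
    have heq : f = (2 * C) • (⟨(gM : Ω → ℝ), mem_Mb_of_mem_MeasI gM⟩ : Mb Ω)
        - C • (⟨(oneM : Ω → ℝ), mem_Mb_of_mem_MeasI oneM⟩ : Mb Ω) := by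
      apply Subtype.ext
      funext ω
      show (f : Ω → ℝ) ω = 2 * C * (((f : Ω → ℝ) ω + C) / (2 * C)) - C * 1
      field_simp
      ring
    calc ψ' f = (2 * C) * ψ' ⟨(gM : Ω → ℝ), mem_Mb_of_mem_MeasI gM⟩
        - C * ψ' ⟨(oneM : Ω → ℝ), mem_Mb_of_mem_MeasI oneM⟩ := by
          rw [heq, map_sub, map_smul, map_smul, smul_eq_mul, smul_eq_mul]
      _ = 2 * C * φ.toFun gM - C := by rw [hp gM, hp oneM, honedef, hone, mul_one]
  -- ψ agrees with φ on MeasI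
  have hext : ∀ f : MeasI Ω, ψ ⟨(f : Ω → ℝ), mem_Mb_of_mem_MeasI f⟩ = φ.toFun f := by
    intro f
    have hb : ∀ ω, |(f : Ω → ℝ) ω| ≤ 1 := fun ω =>
      abs_le.mpr ⟨by linarith [(f.2.2 ω).1], (f.2.2 ω).2⟩
    have hmem : nzA (f : Ω → ℝ) 1 ∈ MeasI Ω := nzA_mem f.2.1 one_pos hb
    have : ψ ⟨(f : Ω → ℝ), mem_Mb_of_mem_MeasI f⟩
        = psiA φ ⟨(f : Ω → ℝ), mem_Mb_of_mem_MeasI f⟩ := rfl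
    rw [this, psiA_eq φ _ one_pos hb hmem]
    have key := affA φ f ⟨_, onemem⟩ ⟨_, hmem⟩ (1/2) (by norm_num) (by
      funext ω
      show ((f : Ω → ℝ) ω + 1) / (2 * 1) = 1/2 * (f : Ω → ℝ) ω + (1 - 1/2) * 1
      ring)
    rw [hone] at key
    unfold valA
    rw [key]
    ring
  refine ⟨ψ, hext, fun ψ' hψ' => ?_⟩
  apply LinearMap.ext
  intro f
  rw [prop_val ψ' hψ' f, prop_val ψ hext f]
end

section
/- Let c and c' be convex subsets of real vector spaces V and V', and h : c → c' an affine map (i.e., h(r·x + (1−r)·y) = r·h(x) + (1−r)·h(y) for x, y ∈ c and r ∈ [0,1]). Then h has a unique extension to an affine map aff(c) → aff(c'), where aff(c) = { r·u + (1−r)·v : u, v ∈ c, r ∈ ℝ } is the affine span of c in V. -/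
open Set

/-- The affine span of a subset of a real vector space, described concretely as the
set of combinations `r • u + (1 - r) • v` with `u, v ∈ c` and `r : ℝ`. -/
def affSpanSet {V : Type*} [AddCommGroup V] [Module ℝ V] (c : Set V) : Set V :=
  {w | ∃ u ∈ c, ∃ v ∈ c, ∃ r : ℝ, w = r • u + (1 - r) • v}

theorem mem_affSpanSet_self {V : Type*} [AddCommGroup V] [Module ℝ V] {c : Set V}
    {x : V} (hx : x ∈ c) : x ∈ affSpanSet c :=
  ⟨x, hx, x, hx, 1, by simp⟩

set_option linter.unusedSectionVars false

section aux
variable {V V' : Type*} [AddCommGroup V] [Module ℝ V] [AddCommGroup V'] [Module ℝ V']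
  {c : Set V} {c' : Set V'}

lemma hcongr (h : c → c') {p q : V} (hpq : p = q) (hp : p ∈ c) (hq : q ∈ c) :
    ((h ⟨p, hp⟩ : c') : V') = ((h ⟨q, hq⟩ : c') : V') := by
  subst hpq; rfl

lemma h_sum (hc : Convex ℝ c) (h : c → c')
    (haff : ∀ (x y : c) (r : ℝ), r ∈ Icc (0:ℝ) 1 →
      ∀ hm : r • (x : V) + (1 - r) • (y : V) ∈ c,
      ((h ⟨_, hm⟩ : c') : V') = r • ((h x : c') : V') + (1 - r) • ((h y : c') : V'))
    {ι : Type} (s : Finset ι) (a : ι → ℝ) (x : ι → c)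
    (ha : ∀ i ∈ s, 0 ≤ a i) (hs : ∑ i ∈ s, a i = 1)
    (hw : (∑ i ∈ s, a i • (x i : V)) ∈ c) :
    ((h ⟨_, hw⟩ : c') : V') = ∑ i ∈ s, a i • ((h (x i) : c') : V') := by
  classical
  induction s using Finset.induction_on generalizing a with
  | empty => simp at hs
  | @insert i s hi ih =>
    rw [Finset.sum_insert hi] at hs
    set t := ∑ j ∈ s, a j with ht
    have hai : a i = 1 - t := by linarith
    have hanneg : ∀ j ∈ s, 0 ≤ a j := fun j hj => ha j (Finset.mem_insert_of_mem hj)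
    have hainneg : 0 ≤ a i := ha i (Finset.mem_insert_self i s)
    have htnneg : 0 ≤ t := Finset.sum_nonneg hanneg
    rcases eq_or_lt_of_le htnneg with ht0 | htpos
    · -- t = 0 : all a j = 0 on s, a i = 1
      have hz : ∀ j ∈ s, a j = 0 :=
        (Finset.sum_eq_zero_iff_of_nonneg hanneg).mp ht0.symm
      have hval : (∑ j ∈ insert i s, a j • (x j : V)) = (x i : V) := by
        rw [Finset.sum_insert hi, Finset.sum_eq_zero (fun j hj => by rw [hz j hj, zero_smul]),
          hai, ← ht0]
        simp
      rw [hcongr h hval hw (x i).2]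
      rw [Finset.sum_insert hi, Finset.sum_eq_zero (fun j hj => by rw [hz j hj, zero_smul]),
        hai, ← ht0]
      simp
    · -- t > 0
      have htne : t ≠ 0 := ne_of_gt htpos
      have ht1 : t ≤ 1 := by linarith
      have hw' : (∑ j ∈ s, (a j / t) • (x j : V)) ∈ c := by
        apply hc.sum_mem (fun j hj => div_nonneg (hanneg j hj) htnneg)
        · rw [← Finset.sum_div, ← ht, div_self htne]
        · exact fun j _ => (x j).2
      have hsum' : (∑ j ∈ s, (a j / t)) = 1 := by
        rw [← Finset.sum_div, ← ht, div_self htne]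
      have ihs := ih (fun j => a j / t) (fun j hj => div_nonneg (hanneg j hj) htnneg)
        hsum' hw'
      have hdecomp : (∑ j ∈ insert i s, a j • (x j : V)) =
          t • (∑ j ∈ s, (a j / t) • (x j : V)) + (1 - t) • (x i : V) := by
        rw [Finset.sum_insert hi, Finset.smul_sum, hai, add_comm]
        congr 1
        apply Finset.sum_congr rfl
        intro j hj
        rw [smul_smul, mul_div_cancel₀ _ htne]
      have hmem2 : t • ((⟨_, hw'⟩ : c) : V) + (1 - t) • ((x i : c) : V) ∈ c := by
        rw [← hdecomp]; exact hw
      rw [hcongr h hdecomp hw hmem2]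
      rw [haff ⟨_, hw'⟩ (x i) t ⟨htnneg, ht1⟩ hmem2, ihs]
      rw [Finset.sum_insert hi, Finset.smul_sum, hai, add_comm]
      congr 1
      apply Finset.sum_congr rfl
      intro j hj
      rw [smul_smul, mul_div_cancel₀ _ htne]


lemma wd (hc : Convex ℝ c) (h : c → c')
    (haff : ∀ (x y : c) (r : ℝ), r ∈ Icc (0:ℝ) 1 →
      ∀ hm : r • (x : V) + (1 - r) • (y : V) ∈ c,
      ((h ⟨_, hm⟩ : c') : V') = r • ((h x : c') : V') + (1 - r) • ((h y : c') : V'))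
    {ι κ : Type} (s : Finset ι) (t : Finset κ)
    (a : ι → ℝ) (b : κ → ℝ) (x : ι → c) (y : κ → c)
    (hsa : ∑ i ∈ s, a i = 1) (htb : ∑ j ∈ t, b j = 1)
    (hxy : ∑ i ∈ s, a i • (x i : V) = ∑ j ∈ t, b j • (y j : V)) :
    ∑ i ∈ s, a i • ((h (x i) : c') : V') = ∑ j ∈ t, b j • ((h (y j) : c') : V') := by
  classical
  set g : ι ⊕ κ → ℝ := Sum.elim a (fun j => -(b j)) with hgdef
  set z : ι ⊕ κ → c := Sum.elim x y with hzdef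
  set u : Finset (ι ⊕ κ) := s.disjSum t with hudef
  have hsum_split : ∀ (f : ι ⊕ κ → V'), ∑ k ∈ u, f k =
      (∑ i ∈ s, f (Sum.inl i)) + (∑ j ∈ t, f (Sum.inr j)) := by
    intro f; rw [hudef, Finset.sum_disjSum]
  have hsum_splitV : ∀ (f : ι ⊕ κ → V), ∑ k ∈ u, f k =
      (∑ i ∈ s, f (Sum.inl i)) + (∑ j ∈ t, f (Sum.inr j)) := by
    intro f; rw [hudef, Finset.sum_disjSum]
  have hsum_splitR : ∀ (f : ι ⊕ κ → ℝ), ∑ k ∈ u, f k =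
      (∑ i ∈ s, f (Sum.inl i)) + (∑ j ∈ t, f (Sum.inr j)) := by
    intro f; rw [hudef, Finset.sum_disjSum]
  have hg0 : ∑ k ∈ u, g k = 0 := by
    rw [hsum_splitR]; simp [hgdef, hsa, htb]
  have hgz : ∑ k ∈ u, g k • (z k : V) = 0 := by
    rw [hsum_splitV]
    simp only [hgdef, hzdef, Sum.elim_inl, Sum.elim_inr, neg_smul]
    rw [Finset.sum_neg_distrib, hxy, add_neg_cancel]
  set gp : ι ⊕ κ → ℝ := fun k => max (g k) 0 with hgp
  set gm : ι ⊕ κ → ℝ := fun k => max (-(g k)) 0 with hgm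
  have hpmsub : ∀ k, gp k - gm k = g k := fun k => max_zero_sub_max_neg_zero_eq_self (g k)
  have hgpn : ∀ k, 0 ≤ gp k := fun k => le_max_right _ _
  have hgmn : ∀ k, 0 ≤ gm k := fun k => le_max_right _ _
  set P := ∑ k ∈ u, gp k with hP
  have hPQ : ∑ k ∈ u, gm k = P := by
    have : ∑ k ∈ u, (gp k - gm k) = 0 := by
      rw [Finset.sum_congr rfl (fun k _ => hpmsub k), hg0]
    rw [Finset.sum_sub_distrib] at this
    linarith
  have hPn : 0 ≤ P := Finset.sum_nonneg (fun k _ => hgpn k)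
  have hPne : P ≠ 0 := by
    intro h0
    have hz1 : ∀ k ∈ u, gp k = 0 :=
      (Finset.sum_eq_zero_iff_of_nonneg (fun k _ => hgpn k)).mp (by rw [← hP, h0])
    have hz2 : ∀ k ∈ u, gm k = 0 :=
      (Finset.sum_eq_zero_iff_of_nonneg (fun k _ => hgmn k)).mp (by rw [hPQ, h0])
    have hga : ∀ i ∈ s, a i = 0 := by
      intro i hi
      have hm : Sum.inl i ∈ u := Finset.inl_mem_disjSum.mpr hi
      have := hpmsub (Sum.inl i)
      rw [hz1 _ hm, hz2 _ hm] at this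
      simpa [hgdef] using this.symm
    rw [Finset.sum_eq_zero hga] at hsa
    exact one_ne_zero hsa.symm
  have hPpos : 0 < P := lt_of_le_of_ne hPn (Ne.symm hPne)
  -- convex combinations
  have hsump : ∑ k ∈ u, gp k / P = 1 := by rw [← Finset.sum_div, ← hP, div_self hPne]
  have hsumm : ∑ k ∈ u, gm k / P = 1 := by rw [← Finset.sum_div, hPQ, div_self hPne]
  have hpmem : (∑ k ∈ u, (gp k / P) • (z k : V)) ∈ c :=
    hc.sum_mem (fun k _ => div_nonneg (hgpn k) hPn) hsump (fun k _ => (z k).2)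
  have hqmem : (∑ k ∈ u, (gm k / P) • (z k : V)) ∈ c :=
    hc.sum_mem (fun k _ => div_nonneg (hgmn k) hPn) hsumm (fun k _ => (z k).2)
  have hpq : (∑ k ∈ u, (gp k / P) • (z k : V)) = ∑ k ∈ u, (gm k / P) • (z k : V) := by
    rw [← sub_eq_zero, ← Finset.sum_sub_distrib]
    have : ∀ k, (gp k / P) • (z k : V) - (gm k / P) • (z k : V) = (g k / P) • (z k : V) := by
      intro k
      rw [← sub_smul, div_sub_div_same, hpmsub]
    rw [Finset.sum_congr rfl (fun k _ => this k)]
    have : ∀ k, (g k / P) • (z k : V) = P⁻¹ • (g k • (z k : V)) := by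
      intro k; rw [smul_smul, ← div_eq_inv_mul]
    rw [Finset.sum_congr rfl (fun k _ => this k), ← Finset.smul_sum, hgz, smul_zero]
  have e1 := h_sum hc h haff u (fun k => gp k / P) z
    (fun k _ => div_nonneg (hgpn k) hPn) hsump hpmem
  have e2 := h_sum hc h haff u (fun k => gm k / P) z
    (fun k _ => div_nonneg (hgmn k) hPn) hsumm hqmem
  have e3 : ∑ k ∈ u, (gp k / P) • ((h (z k) : c') : V') =
      ∑ k ∈ u, (gm k / P) • ((h (z k) : c') : V') := by
    rw [← e1, ← e2]; exact hcongr h hpq hpmem hqmem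
  have e4 : ∑ k ∈ u, g k • ((h (z k) : c') : V') = 0 := by
    have := congrArg (fun w : V' => P • w) e3
    simp only [Finset.smul_sum, smul_smul] at this
    have hc1 : ∀ k, P * (gp k / P) = gp k := fun k => by
      field_simp
    have hc2 : ∀ k, P * (gm k / P) = gm k := fun k => by
      field_simp
    simp only [hc1, hc2] at this
    calc ∑ k ∈ u, g k • ((h (z k) : c') : V')
        = ∑ k ∈ u, ((gp k) • ((h (z k) : c') : V') - (gm k) • ((h (z k) : c') : V')) := by
          refine Finset.sum_congr rfl (fun k _ => ?_)
          rw [← sub_smul, hpmsub]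
      _ = 0 := by rw [Finset.sum_sub_distrib, this, sub_self]
  rw [hsum_split] at e4
  simp only [hgdef, hzdef, Sum.elim_inl, Sum.elim_inr, neg_smul] at e4
  rw [Finset.sum_neg_distrib] at e4
  rw [← sub_eq_zero, sub_eq_add_neg]
  exact e4


lemma wd_pair (hc : Convex ℝ c) (h : c → c')
    (haff : ∀ (x y : c) (r : ℝ), r ∈ Icc (0:ℝ) 1 →
      ∀ hm : r • (x : V) + (1 - r) • (y : V) ∈ c,
      ((h ⟨_, hm⟩ : c') : V') = r • ((h x : c') : V') + (1 - r) • ((h y : c') : V'))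
    (p q : c) (rr : ℝ) {ι : Type} (s : Finset ι) (a : ι → ℝ) (x : ι → c)
    (hsa : ∑ i ∈ s, a i = 1)
    (heq : rr • (p : V) + (1 - rr) • (q : V) = ∑ i ∈ s, a i • (x i : V)) :
    rr • ((h p : c') : V') + (1 - rr) • ((h q : c') : V') =
      ∑ i ∈ s, a i • ((h (x i) : c') : V') := by
  classical
  have := wd hc h haff (Finset.univ : Finset Bool) s
    (fun i => if i then rr else 1 - rr) a
    (fun i => if i then p else q) x
    (by simp [Fintype.sum_bool]) hsa
    (by simpa [Fintype.sum_bool] using heq)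
  simpa [Fintype.sum_bool] using this

end aux

/-- An affine map between convex sets extends uniquely to an affine map between their
affine spans. -/
theorem stmt10 {V V' : Type*} [AddCommGroup V] [Module ℝ V] [AddCommGroup V'] [Module ℝ V']
    (c : Set V) (c' : Set V') (hc : Convex ℝ c) (hc' : Convex ℝ c')
    (h : c → c')
    (haff : ∀ (x y : c) (r : ℝ), r ∈ Icc (0:ℝ) 1 →
      ∀ hm : r • (x : V) + (1 - r) • (y : V) ∈ c,
      ((h ⟨_, hm⟩ : c') : V') = r • ((h x : c') : V') + (1 - r) • ((h y : c') : V')) :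
    ∃! H : affSpanSet c → affSpanSet c',
      (∀ (x y : affSpanSet c) (r : ℝ),
        ∀ hm : r • (x : V) + (1 - r) • (y : V) ∈ affSpanSet c,
        ((H ⟨_, hm⟩ : affSpanSet c') : V') =
          r • ((H x : affSpanSet c') : V') + (1 - r) • ((H y : affSpanSet c') : V')) ∧
      (∀ (x : c), ((H ⟨(x : V), mem_affSpanSet_self x.2⟩ : affSpanSet c') : V') =
        ((h x : c') : V')) := by
  classical
  -- choose a representation of each point of the affine span
  choose u hu v hv ρ hrep using fun w : affSpanSet c => w.2
  -- the candidate extension, at the level of values in V'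
  set E : affSpanSet c → V' := fun w =>
    ρ w • ((h ⟨u w, hu w⟩ : c') : V') + (1 - ρ w) • ((h ⟨v w, hv w⟩ : c') : V') with hE
  -- E is compatible with every affine-combination representation
  have specE : ∀ (w : affSpanSet c) {ι : Type} (s : Finset ι) (a : ι → ℝ) (x : ι → c),
      (∑ i ∈ s, a i) = 1 → (w : V) = ∑ i ∈ s, a i • (x i : V) →
      E w = ∑ i ∈ s, a i • ((h (x i) : c') : V') := by
    intro w ι s a x hsa hwx
    apply wd_pair hc h haff ⟨u w, hu w⟩ ⟨v w, hv w⟩ (ρ w) s a x hsa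
    rw [← hrep w]
    exact hwx
  have memE : ∀ w, E w ∈ affSpanSet c' := fun w =>
    ⟨_, (h ⟨u w, hu w⟩).2, _, (h ⟨v w, hv w⟩).2, ρ w, rfl⟩
  refine ⟨fun w => ⟨E w, memE w⟩, ⟨?_, ?_⟩, ?_⟩
  · -- affineness
    intro x y r hm
    show E ⟨r • (x : V) + (1 - r) • (y : V), hm⟩ = r • E x + (1 - r) • E y
    have hx4 : E ⟨r • (x : V) + (1 - r) • (y : V), hm⟩ =
        (r * ρ x) • ((h ⟨u x, hu x⟩ : c') : V') +
        ((r * (1 - ρ x)) • ((h ⟨v x, hv x⟩ : c') : V') +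
        (((1 - r) * ρ y) • ((h ⟨u y, hu y⟩ : c') : V') +
        ((1 - r) * (1 - ρ y)) • ((h ⟨v y, hv y⟩ : c') : V'))) := by
      have := specE ⟨r • (x : V) + (1 - r) • (y : V), hm⟩ (Finset.univ : Finset (Fin 4))
        ![r * ρ x, r * (1 - ρ x), (1 - r) * ρ y, (1 - r) * (1 - ρ y)]
        ![⟨u x, hu x⟩, ⟨v x, hv x⟩, ⟨u y, hu y⟩, ⟨v y, hv y⟩]
        (by simp [Fin.sum_univ_four]; ring)
        (by
          show r • (x : V) + (1 - r) • (y : V) = _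
          rw [Fin.sum_univ_four]
          simp only [Matrix.cons_val_zero, Matrix.cons_val_one, Matrix.head_cons,
            Matrix.cons_val_two, Matrix.tail_cons, Matrix.cons_val_three]
          rw [hrep x, hrep y]
          show r • (ρ x • (u x) + (1 - ρ x) • (v x)) + (1 - r) • (ρ y • (u y) + (1 - ρ y) • (v y)) = _
          module)
      rw [this, Fin.sum_univ_four]
      simp only [Matrix.cons_val_zero, Matrix.cons_val_one, Matrix.head_cons,
        Matrix.cons_val_two, Matrix.tail_cons, Matrix.cons_val_three]
      abel
    rw [hx4, hE]
    simp only
    module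
  · -- compatibility with h
    intro x
    show E ⟨(x : V), mem_affSpanSet_self x.2⟩ = ((h x : c') : V')
    have := specE ⟨(x : V), mem_affSpanSet_self x.2⟩ (Finset.univ : Finset (Fin 1))
      ![(1 : ℝ)] ![x] (by simp) (by simp)
    rw [this]
    simp
  · -- uniqueness
    intro H' ⟨h1, h2⟩
    funext w
    apply Subtype.ext
    show (H' w : V') = E w
    set X : affSpanSet c := ⟨u w, mem_affSpanSet_self (hu w)⟩ with hX
    set Y : affSpanSet c := ⟨v w, mem_affSpanSet_self (hv w)⟩ with hY
    have hm' : ρ w • (X : V) + (1 - ρ w) • (Y : V) ∈ affSpanSet c := by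
      show ρ w • u w + (1 - ρ w) • v w ∈ affSpanSet c
      rw [← hrep w]; exact w.2
    have hweq : (⟨ρ w • (X : V) + (1 - ρ w) • (Y : V), hm'⟩ : affSpanSet c) = w :=
      Subtype.ext (hrep w).symm
    have := h1 X Y (ρ w) hm'
    rw [hweq] at this
    rw [this]
    have hXval := h2 ⟨u w, hu w⟩
    have hYval := h2 ⟨v w, hv w⟩
    have hX' : (H' X : V') = ((h ⟨u w, hu w⟩ : c') : V') := hXval
    have hY' : (H' Y : V') = ((h ⟨v w, hv w⟩ : c') : V') := hYval
    rw [hX', hY']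
end

section
/- Let d₀ be the set of sequences in [0,1] converging to 0, viewed as a convex subset of the space c₀ of real sequences converging to 0. Every affine map h : d₀ → [0,1] is of the form h(x) = a₀ + Σ_{i=1}^∞ aᵢ xᵢ for some real numbers aᵢ with Σ_{i=1}^∞ |aᵢ| < ∞. -/
open Set Filter

/-- `d₀`: the set of sequences in `[0,1]` converging to `0`. -/
def d0 : Set (ℕ → ℝ) :=
  {x | (∀ n, x n ∈ Icc (0:ℝ) 1) ∧ Tendsto x atTop (nhds 0)}

/-- Every affine map `d₀ → [0,1]` has the form `x ↦ a₀ + ∑ aᵢ xᵢ` with `∑ |aᵢ| < ∞`. -/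
theorem stmt12 (h : (ℕ → ℝ) → ℝ)
    (hmaps : ∀ x ∈ d0, h x ∈ Icc (0:ℝ) 1)
    (haff : ∀ x ∈ d0, ∀ y ∈ d0, ∀ r ∈ Icc (0:ℝ) 1,
      h (fun i => r * x i + (1 - r) * y i) = r * h x + (1 - r) * h y) :
    ∃ (a₀ : ℝ) (a : ℕ → ℝ), Summable (fun i => |a i|) ∧
      ∀ x ∈ d0, h x = a₀ + ∑' i, a i * x i := by
  classical
  have h0mem : (fun _ : ℕ => (0:ℝ)) ∈ d0 :=
    ⟨fun n => ⟨le_refl 0, zero_le_one⟩, tendsto_const_nhds⟩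
  set a₀ : ℝ := h (fun _ => (0:ℝ)) with ha₀def
  have ha₀mem : a₀ ∈ Icc (0:ℝ) 1 := hmaps _ h0mem
  -- scaling
  have hscale : ∀ x ∈ d0, ∀ r ∈ Icc (0:ℝ) 1,
      h (fun i => r * x i) = r * h x + (1 - r) * a₀ := by
    intro x hx r hr
    have := haff x hx _ h0mem r hr
    simpa using this
  -- additivity
  have hadd : ∀ x ∈ d0, ∀ y ∈ d0, (fun i => x i + y i) ∈ d0 →
      h (fun i => x i + y i) = h x + h y - a₀ := by
    intro x hx y hy hxy
    have h1 := haff x hx y hy (1/2) (by norm_num)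
    have h2 := hscale _ hxy (1/2) (by norm_num)
    beta_reduce at h2
    have e1 : (fun i => (1/2 : ℝ) * x i + (1 - 1/2) * y i)
        = fun i => (1/2 : ℝ) * (x i + y i) := by funext i; ring
    rw [e1, h2] at h1
    linarith
  -- basis vectors
  have hemem : ∀ i : ℕ, (fun j => if j = i then (1:ℝ) else 0) ∈ d0 := by
    intro i
    refine ⟨fun n => ?_, ?_⟩
    · by_cases hn : n = i <;> simp [hn]
    · refine Tendsto.congr' ?_ (tendsto_const_nhds : Tendsto (fun _ : ℕ => (0:ℝ)) atTop (nhds 0))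
      filter_upwards [eventually_gt_atTop i] with n hn
      simp [show n ≠ i from by omega]
  set a : ℕ → ℝ := fun i => h (fun j => if j = i then (1:ℝ) else 0) - a₀ with hadef
  have hsingle : ∀ (i : ℕ) (c : ℝ), c ∈ Icc (0:ℝ) 1 →
      h (fun j => if j = i then c else 0) = a₀ + c * a i := by
    intro i c hc
    have hs := hscale _ (hemem i) c hc
    beta_reduce at hs
    have e1 : (fun j => c * (if j = i then (1:ℝ) else 0))
        = fun j => if j = i then c else 0 := by
      funext j; by_cases hj : j = i <;> simp [hj]
    rw [e1] at hs
    rw [hs, hadef]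
    ring
  -- finitely supported sequences
  have hfin : ∀ (c : ℕ → ℝ), (∀ i, c i ∈ Icc (0:ℝ) 1) → ∀ F : Finset ℕ,
      (fun j => if j ∈ F then c j else 0) ∈ d0 ∧
      h (fun j => if j ∈ F then c j else 0) = a₀ + ∑ i ∈ F, c i * a i := by
    intro c hc F
    induction F using Finset.induction_on with
    | empty =>
      constructor
      · simpa using h0mem
      · simpa using ha₀def.symm
    | @insert i F hi ih =>
      obtain ⟨ihmem, iheq⟩ := ih
      have hsmem : (fun j => if j = i then c i else 0) ∈ d0 := by
        refine ⟨fun n => ?_, ?_⟩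
        · by_cases hn : n = i
          · simpa [hn] using hc i
          · simp [hn]
        · refine Tendsto.congr' ?_ (tendsto_const_nhds : Tendsto (fun _ : ℕ => (0:ℝ)) atTop (nhds 0))
          filter_upwards [eventually_gt_atTop i] with n hn
          simp [show n ≠ i from by omega]
      have hsum_eq : (fun j => if j ∈ insert i F then c j else 0)
          = fun j => (if j = i then c i else 0) + (if j ∈ F then c j else 0) := by
        funext j
        by_cases hj : j = i
        · subst hj; simp [hi]
        · by_cases hjF : j ∈ F <;> simp [hj, hjF]
      have hmem2 : (fun j => if j ∈ insert i F then c j else 0) ∈ d0 := by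
        refine ⟨fun n => ?_, ?_⟩
        · by_cases hn : n ∈ insert i F
          · simpa [hn] using hc n
          · simp [hn]
        · rw [hsum_eq]
          simpa using hsmem.2.add ihmem.2
      refine ⟨hmem2, ?_⟩
      have hadd' := hadd _ hsmem _ ihmem (hsum_eq ▸ hmem2)
      beta_reduce at hadd'
      rw [← hsum_eq] at hadd'
      rw [hadd', hsingle i (c i) (hc i), iheq, Finset.sum_insert hi]
      ring
  -- summability
  have key : ∀ G : Finset ℕ, (∑ i ∈ G, a i) ∈ Icc (-1:ℝ) 1 := by
    intro G
    have h1 := (hfin (fun _ => 1) (fun _ => ⟨zero_le_one, le_refl 1⟩) G).1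
    have h2 := (hfin (fun _ => 1) (fun _ => ⟨zero_le_one, le_refl 1⟩) G).2
    have hh := hmaps _ h1
    rw [h2] at hh
    simp only [one_mul] at hh
    exact ⟨by linarith [hh.1, ha₀mem.2], by linarith [hh.2, ha₀mem.1]⟩
  have hFbound : ∀ F : Finset ℕ, ∑ i ∈ F, |a i| ≤ 2 := by
    intro F
    have hsplit := Finset.sum_filter_add_sum_filter_not F (fun i => 0 ≤ a i)
      (fun i => |a i|)
    have hP : ∑ i ∈ F.filter (fun i => 0 ≤ a i), |a i|
        = ∑ i ∈ F.filter (fun i => 0 ≤ a i), a i := by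
      apply Finset.sum_congr rfl
      intro i hi
      exact abs_of_nonneg (Finset.mem_filter.mp hi).2
    have hN : ∑ i ∈ F.filter (fun i => ¬ 0 ≤ a i), |a i|
        = -∑ i ∈ F.filter (fun i => ¬ 0 ≤ a i), a i := by
      rw [← Finset.sum_neg_distrib]
      apply Finset.sum_congr rfl
      intro i hi
      exact abs_of_neg (lt_of_not_ge (Finset.mem_filter.mp hi).2)
    have k1 := (key (F.filter (fun i => 0 ≤ a i))).2
    have k2 := (key (F.filter (fun i => ¬ 0 ≤ a i))).1
    linarith [hsplit, hP, hN]
  have habs : Summable (fun i => |a i|) :=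
    summable_of_sum_range_le (fun n => abs_nonneg _)
      (fun n => hFbound (Finset.range n))
  refine ⟨a₀, a, habs, ?_⟩
  intro x hx
  have hxs : Summable (fun i => a i * x i) := by
    apply Summable.of_norm_bounded habs
    intro i
    rw [Real.norm_eq_abs, abs_mul]
    have hx1 : |x i| ≤ 1 := abs_le.mpr ⟨by linarith [(hx.1 i).1], (hx.1 i).2⟩
    calc |a i| * |x i| ≤ |a i| * 1 := by
          exact mul_le_mul_of_nonneg_left hx1 (abs_nonneg _)
      _ = |a i| := mul_one _
  -- tails
  have htailmem : ∀ N : ℕ, (fun j => if j ∈ Finset.range N then 0 else x j) ∈ d0 := by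
    intro N
    refine ⟨fun n => ?_, ?_⟩
    · by_cases hn : n ∈ Finset.range N
      · simp [hn]
      · simpa [hn] using hx.1 n
    · apply hx.2.congr'
      filter_upwards [eventually_ge_atTop N] with n hn
      rw [if_neg (by simp; omega)]
  have hxeq : ∀ N : ℕ, (fun j => (if j ∈ Finset.range N then x j else 0)
      + (if j ∈ Finset.range N then 0 else x j)) = x := by
    intro N; funext j; by_cases hj : j ∈ Finset.range N <;> simp [hj]
  have key2 : ∀ N : ℕ, ∑ i ∈ Finset.range N, a i * x i
      = h x - h (fun j => if j ∈ Finset.range N then 0 else x j) := by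
    intro N
    have h1 := (hfin x hx.1 (Finset.range N)).1
    have h2 := (hfin x hx.1 (Finset.range N)).2
    have h3 := htailmem N
    have h4 := hadd _ h1 _ h3 (by rw [show (fun i => (fun j => if j ∈ Finset.range N then x j else 0) i + (fun j => if j ∈ Finset.range N then 0 else x j) i) = x from hxeq N]; exact hx)
    beta_reduce at h4
    rw [hxeq N, h2] at h4
    have h5 : ∑ i ∈ Finset.range N, a i * x i = ∑ i ∈ Finset.range N, x i * a i :=
      Finset.sum_congr rfl (fun i _ => mul_comm _ _)
    rw [h5]
    linarith
  -- the tail values tend to a₀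
  have htt : Tendsto (fun N => h (fun j => if j ∈ Finset.range N then 0 else x j))
      atTop (nhds a₀) := by
    rw [Metric.tendsto_atTop]
    intro ε hε
    set δ : ℝ := min (ε/2) 1 with hδdef
    have hδ : 0 < δ := lt_min (by linarith) one_pos
    obtain ⟨N₀, hN₀⟩ := (Metric.tendsto_atTop.mp hx.2) δ hδ
    refine ⟨N₀, fun N hN => ?_⟩
    set t : ℕ → ℝ := fun j => if j ∈ Finset.range N then 0 else x j with htdef
    have htm := htailmem N
    have hsmall : ∀ n, t n ≤ δ ∧ 0 ≤ t n := by
      intro n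
      by_cases hn : n < N
      · simp [t, Finset.mem_range, hn, le_of_lt hδ]
      · have hnN : N ≤ n := Nat.not_lt.mp hn
        have hd := hN₀ n (le_trans hN hnN)
        rw [Real.dist_eq, sub_zero] at hd
        have h0 : 0 ≤ x n := (hx.1 n).1
        have hlt : x n < δ := by rwa [abs_of_nonneg h0] at hd
        constructor
        · simp only [t, Finset.mem_range, if_neg hn]; linarith
        · simp only [t, Finset.mem_range, if_neg hn]; exact h0
    have hzmem : (fun j => t j / δ) ∈ d0 := by
      refine ⟨fun n => ?_, ?_⟩
      · constructor
        · exact div_nonneg (hsmall n).2 (le_of_lt hδ)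
        · rw [div_le_one hδ]; exact (hsmall n).1
      · have h2 : Tendsto (fun j => t j / δ) atTop (nhds ((0:ℝ) / δ)) :=
          htm.2.div_const δ
        simpa only [zero_div] using h2
    have hteq : t = fun j => δ * (t j / δ) := by
      funext j
      field_simp
    have hs := hscale _ hzmem δ ⟨le_of_lt hδ, min_le_right _ _⟩
    beta_reduce at hs
    rw [← hteq] at hs
    have hz01 := hmaps _ hzmem
    have hd : dist (h t) a₀ = |δ * (h (fun j => t j / δ) - a₀)| := by
      rw [Real.dist_eq, hs]; congr 1; ring
    rw [hd, abs_mul, abs_of_pos hδ]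
    have hb : |h (fun j => t j / δ) - a₀| ≤ 1 := by
      rw [abs_le]
      exact ⟨by linarith [hz01.1, ha₀mem.2], by linarith [hz01.2, ha₀mem.1]⟩
    calc δ * |h (fun j => t j / δ) - a₀| ≤ δ * 1 :=
          mul_le_mul_of_nonneg_left hb (le_of_lt hδ)
      _ = δ := mul_one _
      _ ≤ ε / 2 := min_le_left _ _
      _ < ε := by linarith
  have hlim1 : Tendsto (fun N => ∑ i ∈ Finset.range N, a i * x i)
      atTop (nhds (h x - a₀)) := by
    have h1 : Tendsto (fun N => h x
        - h (fun j => if j ∈ Finset.range N then 0 else x j)) atTop (nhds (h x - a₀)) :=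
      tendsto_const_nhds.sub htt
    exact h1.congr (fun N => (key2 N).symm)
  have hlim2 := hxs.hasSum.tendsto_sum_nat
  have := tendsto_nhds_unique hlim1 hlim2
  linarith
end

section
/- Let d₀ be the set of sequences in [0,1] converging to 0, with the σ-algebra inherited as a subspace of the countable product of copies of [0,1] (each with the Borel σ-algebra). Then every affine map h : d₀ → [0,1] is measurable, where [0,1] carries the Borel σ-algebra. -/
open Set Filter

lemma zero_mem_d0 : (fun _ : ℕ => (0:ℝ)) ∈ d0 :=
  ⟨fun _ => ⟨le_refl 0, zero_le_one⟩, tendsto_const_nhds⟩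

lemma e_mem_d0 (i : ℕ) : (fun j : ℕ => if j = i then (1:ℝ) else 0) ∈ d0 := by
  constructor
  · intro n; by_cases hn : n = i <;> simp [hn]
  · apply Tendsto.congr' _ (tendsto_const_nhds (x := (0:ℝ)))
    filter_upwards [eventually_gt_atTop i] with n hn
    simp [Nat.ne_of_gt hn]

lemma combo_mem_d0 {x y : ℕ → ℝ} (hx : x ∈ d0) (hy : y ∈ d0) {r : ℝ}
    (hr : r ∈ Icc (0:ℝ) 1) : (fun i => r * x i + (1 - r) * y i) ∈ d0 := by
  constructor
  · intro n
    show 0 ≤ r * x n + (1 - r) * y n ∧ r * x n + (1 - r) * y n ≤ 1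
    constructor
    · exact add_nonneg (mul_nonneg hr.1 (hx.1 n).1)
        (mul_nonneg (by linarith [hr.2]) (hy.1 n).1)
    · nlinarith [hr.1, hr.2, (hx.1 n).1, (hx.1 n).2, (hy.1 n).1, (hy.1 n).2]
  · have := ((hx.2.const_mul r).add (hy.2.const_mul (1 - r)))
    simpa using this

/-- Every affine map `d₀ → [0,1]` is measurable. -/
theorem stmt13 (h : d0 → ℝ)
    (hmaps : ∀ x, h x ∈ Icc (0:ℝ) 1)
    (haff : ∀ (x y : d0) (r : ℝ), r ∈ Icc (0:ℝ) 1 →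
      ∀ hm : (fun i => r * (x : ℕ → ℝ) i + (1 - r) * (y : ℕ → ℝ) i) ∈ d0,
      h ⟨_, hm⟩ = r * h x + (1 - r) * h y) :
    Measurable h := by
  classical
  set z0 : d0 := ⟨fun _ => 0, zero_mem_d0⟩ with hz0
  set e : ℕ → d0 := fun i => ⟨fun j => if j = i then 1 else 0, e_mem_d0 i⟩ with he
  set a : ℕ → ℝ := fun i => h (e i) - h z0 with ha
  -- affine combination lemma with explicit witness
  have haff' : ∀ (x y w : d0) (r : ℝ), r ∈ Icc (0:ℝ) 1 →
      (∀ i, (w : ℕ → ℝ) i = r * (x : ℕ → ℝ) i + (1 - r) * (y : ℕ → ℝ) i) →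
      h w = r * h x + (1 - r) * h y := by
    intro x y w r hr hw
    have hm : (fun i => r * (x : ℕ → ℝ) i + (1 - r) * (y : ℕ → ℝ) i) ∈ d0 := by
      have hfe : (fun i => r * (x : ℕ → ℝ) i + (1 - r) * (y : ℕ → ℝ) i) = (w : ℕ → ℝ) := by
        funext i; rw [hw i]
      rw [hfe]; exact w.2
    have hkey := haff x y r hr hm
    have hw' : w = ⟨_, hm⟩ := Subtype.ext (by funext i; exact hw i)
    rw [hw', hkey]
  -- midpoint exchange
  have hmid : ∀ (x y x' y' : d0),
      (∀ i, (x : ℕ → ℝ) i + (y : ℕ → ℝ) i = (x' : ℕ → ℝ) i + (y' : ℕ → ℝ) i) →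
      h x + h y = h x' + h y' := by
    intro x y x' y' hxy
    have hhalf : (1/2 : ℝ) ∈ Icc (0:ℝ) 1 := by norm_num
    set w : d0 := ⟨fun i => (1/2) * (x : ℕ → ℝ) i + (1 - 1/2) * (y : ℕ → ℝ) i,
      combo_mem_d0 x.2 y.2 hhalf⟩ with hwdef
    have h1 : h w = (1/2) * h x + (1 - 1/2) * h y :=
      haff' x y w (1/2) hhalf (fun i => rfl)
    have h2 : h w = (1/2) * h x' + (1 - 1/2) * h y' := by
      apply haff' x' y' w (1/2) hhalf
      intro i
      have := hxy i
      show (1/2) * (x : ℕ → ℝ) i + (1 - 1/2) * (y : ℕ → ℝ) i = _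
      linarith
    linarith
  -- formula for finitely supported elements
  have hfin : ∀ n (x : d0), (∀ i, n ≤ i → (x : ℕ → ℝ) i = 0) →
      h x = h z0 + ∑ i ∈ Finset.range n, a i * (x : ℕ → ℝ) i := by
    intro n
    induction n with
    | zero =>
      intro x hx
      have : x = z0 := Subtype.ext (funext fun i => hx i (Nat.zero_le i))
      simp [this]
    | succ n ih =>
      intro x hx
      set t : ℝ := (x : ℕ → ℝ) n with ht
      have htm : t ∈ Icc (0:ℝ) 1 := x.2.1 n
      -- x0 : x with n-th coordinate set to 0
      have hx0mem : (fun i => if i = n then (0:ℝ) else (x : ℕ → ℝ) i) ∈ d0 := by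
        constructor
        · intro i; by_cases hi : i = n
          · simp [hi]
          · simpa [hi] using x.2.1 i
        · apply Tendsto.congr' _ x.2.2
          filter_upwards [eventually_gt_atTop n] with i hi
          simp [Nat.ne_of_gt hi]
      have hx1mem : (fun i => if i = n then (1:ℝ) else (x : ℕ → ℝ) i) ∈ d0 := by
        constructor
        · intro i; by_cases hi : i = n
          · simp [hi]
          · simpa [hi] using x.2.1 i
        · apply Tendsto.congr' _ x.2.2
          filter_upwards [eventually_gt_atTop n] with i hi
          simp [Nat.ne_of_gt hi]
      set x0 : d0 := ⟨_, hx0mem⟩ with hx0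
      set x1 : d0 := ⟨_, hx1mem⟩ with hx1
      -- midpoint identity: x1 + z0 = x0 + e n  pointwise
      have e1 : h x1 + h z0 = h x0 + h (e n) := by
        apply hmid
        intro i
        by_cases hi : i = n <;> simp [x1, x0, e, z0, hi]
      -- affine split of x
      have e2 : h x = t * h x1 + (1 - t) * h x0 := by
        apply haff' x1 x0 x t htm
        intro i
        by_cases hi : i = n <;> simp [x1, x0, hi, ht] <;> ring
      have hx0supp : ∀ i, n ≤ i → (x0 : ℕ → ℝ) i = 0 := by
        intro i hi
        by_cases h' : i = n
        · simp [x0, h']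
        · have : n + 1 ≤ i := Nat.lt_of_le_of_ne hi (fun hh => h' hh.symm)
          simp [x0, h', hx i this]
      have e3 := ih x0 hx0supp
      have hsum : ∑ i ∈ Finset.range n, a i * (x0 : ℕ → ℝ) i
          = ∑ i ∈ Finset.range n, a i * (x : ℕ → ℝ) i := by
        apply Finset.sum_congr rfl
        intro i hi
        have : i ≠ n := Nat.ne_of_lt (Finset.mem_range.mp hi)
        simp [x0, this]
      have han : a n = h (e n) - h z0 := rfl
      rw [Finset.sum_range_succ]
      have : h x1 = h x0 + a n := by rw [han]; linarith [e1]
      rw [e2, this, e3, hsum, ← ht]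
      ring
  -- measurable approximants
  set f : ℕ → d0 → ℝ :=
    fun n x => h z0 + ∑ i ∈ Finset.range n, a i * (x : ℕ → ℝ) i with hf
  have hfmeas : ∀ n, Measurable (f n) := by
    intro n
    apply Measurable.add measurable_const
    apply Finset.measurable_sum
    intro i _
    exact Measurable.mul measurable_const ((measurable_pi_apply i).comp measurable_subtype_coe)
  -- pointwise convergence
  have hconv : ∀ x : d0, Tendsto (fun n => f n x) atTop (nhds (h x)) := by
    intro x
    rw [Metric.tendsto_atTop]
    intro ε hε
    set δ : ℝ := min (ε/2) 1 with hδ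
    have hδpos : 0 < δ := lt_min (by linarith) one_pos
    have hδ1 : δ ≤ 1 := min_le_right _ _
    have hδε : δ < ε := lt_of_le_of_lt (min_le_left _ _) (by linarith)
    -- choose N with x i < δ for i ≥ N
    have : ∀ᶠ i in atTop, |(x : ℕ → ℝ) i - 0| < δ :=
      (Metric.tendsto_nhds.mp x.2.2 δ hδpos).mono (fun i hi => by
        simpa [Real.dist_eq] using hi)
    obtain ⟨N, hN⟩ := this.exists_forall_of_atTop
    refine ⟨N, fun n hn => ?_⟩
    have hxsmall : ∀ i, n ≤ i → (x : ℕ → ℝ) i ≤ δ := by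
      intro i hi
      have := hN i (le_trans hn hi)
      have hnn := (x.2.1 i).1
      rw [sub_zero, abs_of_nonneg hnn] at this
      linarith
    -- truncation
    have hTmem : (fun i => if i < n then (x : ℕ → ℝ) i else 0) ∈ d0 := by
      constructor
      · intro i; by_cases hi : i < n
        · simpa [hi] using x.2.1 i
        · simp [hi]
      · apply Tendsto.congr' _ (tendsto_const_nhds (x := (0:ℝ)))
        filter_upwards [eventually_ge_atTop n] with i hi
        simp [Nat.not_lt.mpr hi]
    have hZmem : (fun i => if i < n then (x : ℕ → ℝ) i else (x : ℕ → ℝ) i / δ) ∈ d0 := by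
      constructor
      · intro i; by_cases hi : i < n
        · simpa [hi] using x.2.1 i
        · simp only [hi, if_false]
          constructor
          · exact div_nonneg (x.2.1 i).1 hδpos.le
          · exact (div_le_one hδpos).mpr (hxsmall i (Nat.not_lt.mp hi))
      · apply Tendsto.congr' _ (show Tendsto (fun i => (x : ℕ → ℝ) i / δ) atTop (nhds 0) by simpa using x.2.2.div_const δ)
        filter_upwards [eventually_ge_atTop n] with i hi
        simp [Nat.not_lt.mpr hi, zero_div]
    set T : d0 := ⟨_, hTmem⟩ with hT
    set Z : d0 := ⟨_, hZmem⟩ with hZ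
    have hrm : (1 - δ) ∈ Icc (0:ℝ) 1 := ⟨by linarith, by linarith⟩
    have hsplit : h x = (1 - δ) * h T + (1 - (1 - δ)) * h Z := by
      apply haff' T Z x (1 - δ) hrm
      intro i
      by_cases hi : i < n
      · simp [T, Z, hi]; ring
      · simp only [hT, hZ, hi, if_false]
        field_simp
        ring
      -- goal: x i = (1-δ)*0 + (1-(1-δ))*(x i/δ)
    have hTval : h T = f n x := by
      have := hfin n T (fun i hi => by simp [T, Nat.not_lt.mpr hi])
      rw [this, hf]
      congr 1
      apply Finset.sum_congr rfl
      intro i hi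
      have : i < n := Finset.mem_range.mp hi
      simp [T, this]
    have hb1 := hmaps T
    have hb2 := hmaps Z
    rw [Real.dist_eq, ← hTval]
    have : h x - h T = δ * (h Z - h T) := by rw [hsplit]; ring
    have habs : |h T - h x| ≤ δ := by
      rw [abs_sub_comm, this, abs_mul, abs_of_nonneg hδpos.le]
      have : |h Z - h T| ≤ 1 := by
        rw [abs_le]
        constructor <;> [linarith [hb1.2, hb2.1]; linarith [hb1.1, hb2.2]]
      nlinarith [hδpos]
    linarith
  exact measurable_of_tendsto_metrizable hfmeas
    (tendsto_pi_nhds.mpr hconv)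
end

section
/- Let Ω be a measurable space, and let α be a family of functions α_c : Meas(Ω, Uc) → Uc, indexed by objects c of the category 𝒞 of finite powers of [0,1] and affine maps, natural in c (where U is the forgetful functor to measurable spaces). Then α_{[0,1]} : Meas(Ω,[0,1]) → [0,1] is affine and weakly averaging, and moreover α_{[0,1]ⁿ} is given by applying α_{[0,1]} componentwise: α_{[0,1]ⁿ}(f₁,…,fₙ) = (α_{[0,1]}(f₁),…,α_{[0,1]}(fₙ)). -/
open Set

/-- the unit cube `[0,1]ⁿ` -/
def InCube {n : ℕ} (x : Fin n → ℝ) : Prop := ∀ i, x i ∈ Icc (0:ℝ) 1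

/-- `Meas(Ω, Iⁿ)`: measurable maps from `Ω` to the unit cube. -/
def MeasCube (Ω : Type*) [MeasurableSpace Ω] (n : ℕ) : Set (Ω → (Fin n → ℝ)) :=
  {f | Measurable f ∧ ∀ ω, InCube (f ω)}

/-- An affine map `Iⁿ → Iᵐ` (a morphism of the category `𝒞`). -/
def IsAffineCubeMap {n m : ℕ} (h : (Fin n → ℝ) → (Fin m → ℝ)) : Prop :=
  (∀ x, InCube x → InCube (h x)) ∧
  ∀ x y (r : ℝ), InCube x → InCube y → r ∈ Icc (0:ℝ) 1 →
    h (fun i => r * x i + (1 - r) * y i) = fun i => r * h x i + (1 - r) * h y i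

/-- A family `α_c : Meas(Ω, Uc) → Uc` natural in `c ∈ 𝒞` has affine, weakly averaging
component at `I`, and its component at `Iⁿ` is given by applying the `I` component
coordinatewise. -/
theorem stmt17 {Ω : Type*} [MeasurableSpace Ω]
    (α : ∀ n : ℕ, MeasCube Ω n → (Fin n → ℝ))
    (hval : ∀ n f, InCube (α n f))
    (hnat : ∀ (n m : ℕ) (h : (Fin n → ℝ) → (Fin m → ℝ)), IsAffineCubeMap h →
      ∀ (f : MeasCube Ω n) (hhf : (fun ω => h ((f : Ω → Fin n → ℝ) ω)) ∈ MeasCube Ω m),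
      α m ⟨_, hhf⟩ = h (α n f)) :
    (∀ r ∈ Icc (0:ℝ) 1, ∀ h : (fun _ : Ω => fun _ : Fin 1 => r) ∈ MeasCube Ω 1,
      α 1 ⟨_, h⟩ 0 = r) ∧
    (∀ (f g : Ω → ℝ) (r : ℝ), r ∈ Icc (0:ℝ) 1 →
      ∀ (hf : (fun ω => fun _ : Fin 1 => f ω) ∈ MeasCube Ω 1)
        (hg : (fun ω => fun _ : Fin 1 => g ω) ∈ MeasCube Ω 1)
        (hc : (fun ω => fun _ : Fin 1 => r * f ω + (1 - r) * g ω) ∈ MeasCube Ω 1),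
      α 1 ⟨_, hc⟩ 0 = r * α 1 ⟨_, hf⟩ 0 + (1 - r) * α 1 ⟨_, hg⟩ 0) ∧
    (∀ (n : ℕ) (f : MeasCube Ω n) (i : Fin n)
      (hi : (fun ω => fun _ : Fin 1 => (f : Ω → Fin n → ℝ) ω i) ∈ MeasCube Ω 1),
      α n f i = α 1 ⟨_, hi⟩ 0) := by
  have key : ∀ (n : ℕ) (f : MeasCube Ω n) (i : Fin n)
      (hi : (fun ω => fun _ : Fin 1 => (f : Ω → Fin n → ℝ) ω i) ∈ MeasCube Ω 1),
      α n f i = α 1 ⟨_, hi⟩ 0 := by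
    intro n f i hi
    have haff : IsAffineCubeMap (fun x : Fin n → ℝ => fun _ : Fin 1 => x i) :=
      ⟨fun x hx _ => hx i, fun x y r hx hy hr => rfl⟩
    have := hnat n 1 _ haff f hi
    rw [this]
  refine ⟨?_, ?_, key⟩
  · intro r hr h
    have haff : IsAffineCubeMap (fun _ : Fin 1 → ℝ => fun _ : Fin 1 => r) := by
      refine ⟨fun x hx _ => hr, fun x y s hx hy hs => ?_⟩
      funext j; ring
    have := hnat 1 1 _ haff ⟨_, h⟩ h
    rw [this]
  · intro f g r hr hf hg hc
    set F : Ω → Fin 2 → ℝ := fun ω j => if j = 0 then f ω else g ω with hFdef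
    have hmf : Measurable f := (measurable_pi_apply 0).comp hf.1
    have hmg : Measurable g := (measurable_pi_apply 0).comp hg.1
    have hF : F ∈ MeasCube Ω 2 := by
      constructor
      · rw [measurable_pi_iff]
        intro j
        by_cases hj : j = 0 <;> simp [hFdef, hj, hmf, hmg]
      · intro ω j
        by_cases hj : j = 0
        · simpa [hFdef, hj] using hf.2 ω 0
        · simpa [hFdef, hj] using hg.2 ω 0
    set h₂ : (Fin 2 → ℝ) → (Fin 1 → ℝ) :=
      fun x => fun _ => r * x 0 + (1 - r) * x 1 with hh2def
    have haff : IsAffineCubeMap h₂ := by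
      constructor
      · intro x hx j
        simp only [hh2def]
        constructor
        · have := (hx 0).1; have := (hx 1).1
          have h1 : (0:ℝ) ≤ r := hr.1
          have h2 : (0:ℝ) ≤ 1 - r := by linarith [hr.2]
          positivity
        · nlinarith [(hx 0).2, (hx 1).2, (hx 0).1, (hx 1).1, hr.1, hr.2]
      · intro x y s hx hy hs
        funext j
        simp only [hh2def]
        ring
    have hhf : (fun ω => h₂ (F ω)) ∈ MeasCube Ω 1 := by
      have : (fun ω => h₂ (F ω)) = fun ω => fun _ : Fin 1 => r * f ω + (1 - r) * g ω := by
        funext ω j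
        simp [hh2def, hFdef]
      rw [this]; exact hc
    have hnat2 := hnat 2 1 h₂ haff ⟨F, hF⟩ hhf
    have heq : (⟨fun ω => h₂ (F ω), hhf⟩ : MeasCube Ω 1) = ⟨_, hc⟩ := by
      apply Subtype.ext
      funext ω j
      simp [hh2def, hFdef]
    rw [heq] at hnat2
    rw [hnat2]
    have hi0 : (fun ω => fun _ : Fin 1 => F ω 0) ∈ MeasCube Ω 1 := hf
    have hi1 : (fun ω => fun _ : Fin 1 => F ω 1) ∈ MeasCube Ω 1 := hg
    have e0 : α 2 ⟨F, hF⟩ 0 = α 1 ⟨_, hi0⟩ 0 := key 2 ⟨F, hF⟩ 0 hi0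
    have e1 : α 2 ⟨F, hF⟩ 1 = α 1 ⟨_, hi1⟩ 0 := key 2 ⟨F, hF⟩ 1 hi1
    show r * α 2 ⟨F, hF⟩ 0 + (1 - r) * α 2 ⟨F, hF⟩ 1 = _
    rw [e0, e1]
    rfl
end
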